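/- The amoeba of a nonzero polynomial in two complex variables is a closed subset of ℝ². -/

import Mathlib

open MeasureTheory

noncomputable def mvEval (f : MvPolynomial (Fin 2) ℂ) (z₁ z₂ : ℂ) : ℂ :=
  MvPolynomial.eval (fun i : Fin 2 => if i = 0 then z₁ else z₂) f

def torusZeroSet (f : MvPolynomial (Fin 2) ℂ) : Set (ℂ × ℂ) :=
  {z | z.1 ≠ 0 ∧ z.2 ≠ 0 ∧ mvEval f z.1 z.2 = 0}

noncomputable def amoebaLog (z : ℂ × ℂ) : ℝ × ℝ :=
  (Real.log (‖z.1‖), Real.log (‖z.2‖))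

noncomputable def amoeba (f : MvPolynomial (Fin 2) ℂ) : Set (ℝ × ℝ) :=
  amoebaLog '' torusZeroSet f

lemma continuous_mvEval (f : MvPolynomial (Fin 2) ℂ) :
    Continuous fun z : ℂ × ℂ => mvEval f z.1 z.2 := by
  have h1 : Continuous fun z : ℂ × ℂ => (fun i : Fin 2 => if i = 0 then z.1 else z.2) := by
    apply continuous_pi
    intro i
    by_cases h : i = 0
    · simp only [h, if_pos]; exact continuous_fst
    · simp only [h, if_false]; exact continuous_snd
  exact (MvPolynomial.continuous_eval f).comp h1

theorem amoeba_isClosed (f : MvPolynomial (Fin 2) ℂ) (hf : f ≠ 0) :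
    IsClosed (amoeba f) := by
  rw [← isSeqClosed_iff_isClosed]
  intro u x hu hx
  choose z hz hzu using hu
  have habs1 : ∀ n, ‖(z n).1‖ = Real.exp ((u n).1) := fun n => by
    have h1 : Real.log (‖(z n).1‖) = (u n).1 := congrArg Prod.fst (hzu n)
    rw [← h1, Real.exp_log (norm_pos_iff.mpr (hz n).1)]
  have habs2 : ∀ n, ‖(z n).2‖ = Real.exp ((u n).2) := fun n => by
    have h1 : Real.log (‖(z n).2‖) = (u n).2 := congrArg Prod.snd (hzu n)
    rw [← h1, Real.exp_log (norm_pos_iff.mpr (hz n).2.1)]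
  -- eventual bound
  obtain ⟨N, hN⟩ := Metric.tendsto_atTop.1 hx 1 one_pos
  set b : ℝ := Real.exp (‖x‖ + 1) with hb
  have hubd : ∀ n, ‖u (n + N)‖ ≤ ‖x‖ + 1 := by
    intro n
    have := (hN (n + N) (Nat.le_add_left _ _)).le
    have h2 := norm_sub_norm_le (u (n + N)) x
    rw [← dist_eq_norm] at h2
    linarith
  have hK : IsCompact ((Metric.closedBall (0:ℂ) b) ×ˢ (Metric.closedBall (0:ℂ) b)) :=
    (isCompact_closedBall _ _).prod (isCompact_closedBall _ _)
  have hmem : ∀ n, z (n + N) ∈ (Metric.closedBall (0:ℂ) b) ×ˢ (Metric.closedBall (0:ℂ) b) := by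
    intro n
    constructor
    · simp only [Metric.mem_closedBall, dist_zero_right]
      rw [habs1]
      exact Real.exp_le_exp.2 ((le_abs_self _).trans ((norm_fst_le _).trans (hubd n)))
    · simp only [Metric.mem_closedBall, dist_zero_right]
      rw [habs2]
      exact Real.exp_le_exp.2 ((le_abs_self _).trans ((norm_snd_le _).trans (hubd n)))
  obtain ⟨w, hwK, φ, hφ, hwt⟩ := hK.tendsto_subseq hmem
  have hφN : Filter.Tendsto (fun n => φ n + N) Filter.atTop Filter.atTop :=
    Filter.tendsto_atTop_mono (fun n => Nat.le_add_right _ _) hφ.tendsto_atTop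
  have huφ : Filter.Tendsto (fun n => u (φ n + N)) Filter.atTop (nhds x) := hx.comp hφN
  -- abs of limit coords
  have hw1 : ‖w.1‖ = Real.exp x.1 := by
    have t1 : Filter.Tendsto (fun n => ‖(z (φ n + N)).1‖) Filter.atTop
        (nhds (‖w.1‖)) := (continuous_norm.tendsto _).comp ((continuous_fst.tendsto w).comp hwt)
    have t2 : Filter.Tendsto (fun n => ‖(z (φ n + N)).1‖) Filter.atTop
        (nhds (Real.exp x.1)) := by
      simp only [habs1]
      exact (Real.continuous_exp.tendsto _).comp ((continuous_fst.tendsto _).comp huφ)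
    exact tendsto_nhds_unique t1 t2
  have hw2 : ‖w.2‖ = Real.exp x.2 := by
    have t1 : Filter.Tendsto (fun n => ‖(z (φ n + N)).2‖) Filter.atTop
        (nhds (‖w.2‖)) := (continuous_norm.tendsto _).comp ((continuous_snd.tendsto w).comp hwt)
    have t2 : Filter.Tendsto (fun n => ‖(z (φ n + N)).2‖) Filter.atTop
        (nhds (Real.exp x.2)) := by
      simp only [habs2]
      exact (Real.continuous_exp.tendsto _).comp ((continuous_snd.tendsto _).comp huφ)
    exact tendsto_nhds_unique t1 t2
  have hw1ne : w.1 ≠ 0 := by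
    intro h
    rw [h] at hw1; simp at hw1
    exact (Real.exp_pos x.1).ne hw1
  have hw2ne : w.2 ≠ 0 := by
    intro h
    rw [h] at hw2; simp at hw2
    exact (Real.exp_pos x.2).ne hw2
  have hfw : mvEval f w.1 w.2 = 0 := by
    have t1 : Filter.Tendsto (fun n => mvEval f (z (φ n + N)).1 (z (φ n + N)).2)
        Filter.atTop (nhds (mvEval f w.1 w.2)) :=
      ((continuous_mvEval f).tendsto _).comp hwt
    have t2 : (fun n => mvEval f (z (φ n + N)).1 (z (φ n + N)).2) = fun _ => (0:ℂ) := by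
      funext n; exact (hz (φ n + N)).2.2
    rw [t2] at t1
    exact tendsto_nhds_unique t1 tendsto_const_nhds
  refine ⟨w, ⟨hw1ne, hw2ne, hfw⟩, ?_⟩
  unfold amoebaLog
  rw [hw1, hw2, Real.log_exp, Real.log_exp]
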